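/- For every integer q ≥ 3 and θ = 1 − 1/q, the function α_EP on [0,θ], defined by α_EP(x) = 1 − H_q(θ − √(θ² − xθ)) for x ∈ [0, (2q−3)/(q(q−1))] and α_EP(x) = (θ − x)(q−1)log_q(q−1)/(q−2) for x ∈ [(2q−3)/(q(q−1)), θ], is convex on [0,θ], continuously differentiable on (0,θ), and satisfies α_EP(x) ≤ α_E(x) := 1 − H_q(θ(1 − √(1 − x/θ))) (the Elias bound) and α_EP(x) ≤ 1 − x/θ (the Plotkin bound) for all x ∈ [0,θ]. -/

import Mathlib

open Filter Real Set


/-- The q-ary entropy function. -/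
noncomputable def qEntropy (q : ℕ) (x : ℝ) : ℝ :=
  x * Real.logb q (((q : ℝ) - 1) / x) + (1 - x) * Real.logb q (1 / (1 - x))

/-- The Elias bound `α_E` (with `θ = 1 - 1/q`). -/
noncomputable def alphaE (q : ℕ) (x : ℝ) : ℝ :=
  1 - qEntropy q ((1 - 1 / (q : ℝ)) * (1 - Real.sqrt (1 - x / (1 - 1 / (q : ℝ)))))

/-- The hybrid Elias-Plotkin bound `α_EP` (with `θ = 1 - 1/q`). -/
noncomputable def alphaEP (q : ℕ) (x : ℝ) : ℝ :=
  if x ≤ (2 * (q : ℝ) - 3) / ((q : ℝ) * ((q : ℝ) - 1)) then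
    1 - qEntropy q ((1 - 1 / (q : ℝ)) -
      Real.sqrt ((1 - 1 / (q : ℝ)) ^ 2 - x * (1 - 1 / (q : ℝ))))
  else ((1 - 1 / (q : ℝ)) - x) * (((q : ℝ) - 1) * Real.logb q ((q : ℝ) - 1) / ((q : ℝ) - 2))

namespace EPaux

noncomputable def Hf (Q y : ℝ) : ℝ :=
  (y * Real.log (Q-1) - y * Real.log y - (1-y) * Real.log (1-y)) / Real.log Q
noncomputable def Hd (Q y : ℝ) : ℝ :=
  (Real.log (Q-1) - Real.log y + Real.log (1-y)) / Real.log Q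
noncomputable def thQ (Q : ℝ) : ℝ := 1 - 1/Q
noncomputable def xsQ (Q : ℝ) : ℝ := (2*Q-3)/(Q*(Q-1))
noncomputable def slp (Q : ℝ) : ℝ := (Q-1) * Real.logb Q (Q-1) / (Q-2)
noncomputable def rQ (Q x : ℝ) : ℝ := Real.sqrt ((thQ Q)^2 - x * thQ Q)
noncomputable def yQ (Q x : ℝ) : ℝ := thQ Q - rQ Q x
noncomputable def Bf (Q x : ℝ) : ℝ := 1 - Hf Q (yQ Q x)
noncomputable def linf (Q x : ℝ) : ℝ := (thQ Q - x) * slp Q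
noncomputable def DL (Q x : ℝ) : ℝ := -(thQ Q / (2 * rQ Q x)) * Hd Q (yQ Q x)
noncomputable def Dfun (Q x : ℝ) : ℝ := if x ≤ xsQ Q then DL Q x else -slp Q
noncomputable def Kc (Q : ℝ) : ℝ := Q * Real.log (Q-1) / ((Q-2) * Real.log Q)
noncomputable def psif (Q y : ℝ) : ℝ := Hf Q y - (2 * thQ Q * y - y^2) / (thQ Q)^2
noncomputable def Ff (Q y : ℝ) : ℝ := 1 - Hf Q y - Kc Q * (thQ Q - y)^2
noncomputable def dpsi (Q y : ℝ) : ℝ := Hd Q y - (2 * thQ Q - 2*y)/(thQ Q)^2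
noncomputable def dF (Q y : ℝ) : ℝ := -Hd Q y + 2 * Kc Q * (thQ Q - y)

section basic
variable {Q : ℝ}

lemma hQ0 (hQ : 3 ≤ Q) : (0:ℝ) < Q := lt_of_lt_of_le (by norm_num) hQ
lemma hQ1 (hQ : 3 ≤ Q) : (1:ℝ) < Q := lt_of_lt_of_le (by norm_num) hQ
lemma logQ_pos (hQ : 3 ≤ Q) : 0 < Real.log Q := Real.log_pos (hQ1 hQ)
lemma hQm1 (hQ : 3 ≤ Q) : (2:ℝ) ≤ Q - 1 := by linarith
lemma logQ1_pos (hQ : 3 ≤ Q) : 0 < Real.log (Q-1) := Real.log_pos (by linarith)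
lemma th_pos (hQ : 3 ≤ Q) : 0 < thQ Q := by
  have := hQ0 hQ
  rw [thQ]; rw [sub_pos, div_lt_one this]; linarith
lemma th_lt_one (hQ : 3 ≤ Q) : thQ Q < 1 := by
  have := hQ0 hQ
  rw [thQ]; have : 0 < 1/Q := by positivity
  linarith
lemma th_eq (hQ : 3 ≤ Q) : thQ Q = (Q-1)/Q := by
  have := hQ0 hQ
  rw [thQ]; field_simp
lemma xs_pos (hQ : 3 ≤ Q) : 0 < xsQ Q := by
  have := hQ0 hQ
  rw [xsQ]; apply div_pos (by linarith) (by nlinarith)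
lemma xs_lt_th (hQ : 3 ≤ Q) : xsQ Q < thQ Q := by
  have h0 := hQ0 hQ
  rw [xsQ, th_eq hQ, div_lt_div_iff₀ (by nlinarith) h0]
  nlinarith [sq_nonneg (Q-2)]

end basic

section scalar

lemma L1 {s : ℝ} (hs : 1 ≤ s) : 2*(s*Real.log s) ≤ s^2 - 1 := by
  have key : MonotoneOn (fun s : ℝ => s^2 - 1 - 2*(s*Real.log s)) (Ici 1) := by
    apply monotoneOn_of_deriv_nonneg (convex_Ici 1)
    · exact (((continuous_pow 2).sub continuous_const).sub
        (continuous_const.mul Real.continuous_mul_log)).continuousOn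
    · intro x hx
      rw [interior_Ici] at hx
      have hx0 : x ≠ 0 := by rw [mem_Ioi] at hx; positivity
      exact (((hasDerivAt_pow 2 x).sub_const 1).sub
        ((Real.hasDerivAt_mul_log hx0).const_mul 2)).differentiableAt.differentiableWithinAt
    · intro x hx
      rw [interior_Ici, mem_Ioi] at hx
      have hx0 : x ≠ 0 := by positivity
      have h := (((hasDerivAt_pow 2 x).sub_const 1).sub
        ((Real.hasDerivAt_mul_log hx0).const_mul 2)).deriv
      erw [h]
      have hlog : Real.log x ≤ x - 1 := Real.log_le_sub_one_of_pos (by linarith)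
      push_cast
      nlinarith
  have h := key (self_mem_Ici) hs hs
  simp only [Real.log_one] at h
  nlinarith [h]

lemma L1' {t : ℝ} (ht : 1 ≤ t) : Real.sqrt t * Real.log t ≤ t - 1 := by
  have h0 : (0:ℝ) ≤ t := by linarith
  have h1 : 1 ≤ Real.sqrt t := by
    rw [show (1:ℝ) = Real.sqrt 1 by simp]
    exact Real.sqrt_le_sqrt ht
  have := L1 h1
  rw [Real.log_sqrt h0, Real.sq_sqrt h0] at this
  nlinarith [this]

lemma log_three_le : Real.log 3 ≤ 4/3 := by
  rw [Real.log_le_iff_le_exp (by norm_num)]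
  have h1 : (4:ℝ)/3 = (4:ℕ) * (1/3 : ℝ) := by norm_num
  rw [h1, Real.exp_nat_mul]
  have h2 : (1:ℝ)/3 + 1 ≤ Real.exp (1/3) := Real.add_one_le_exp (1/3)
  calc (3:ℝ) ≤ ((1:ℝ)/3 + 1)^(4:ℕ) := by norm_num
    _ ≤ Real.exp (1/3) ^ (4:ℕ) := by
        apply pow_le_pow_left₀ (by norm_num) h2

lemma logQ_le {Q : ℝ} (hQ : 3 ≤ Q) : Q * Real.log Q ≤ (Q-1)^2 := by
  have h0 := hQ0 hQ
  have h1 : Real.log (Q/3) = Real.log Q - Real.log 3 := Real.log_div (by linarith) (by norm_num)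
  have h2 : Real.log (Q/3) ≤ Q/3 - 1 := Real.log_le_sub_one_of_pos (by positivity)
  have h3 := log_three_le
  nlinarith [h1, h2, h3, sq_nonneg (Q-3)]

lemma L2 {Q : ℝ} (hQ : 3 ≤ Q) : (Q-1)^2 * Real.log (Q-1) ≤ Q*(Q-2)*Real.log Q := by
  have h0 := hQ0 hQ
  have ha : Real.log (Q-1) ≤ Real.log Q - 1/Q := by
    have : Real.log ((Q-1)/Q) ≤ (Q-1)/Q - 1 := Real.log_le_sub_one_of_pos (by
      apply div_pos (by linarith) h0)
    rw [Real.log_div (by linarith) (by linarith)] at this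
    have hq : (Q-1)/Q - 1 = -(1/Q) := by field_simp; ring
    rw [hq] at this; linarith
  have hb := logQ_le hQ
  have ha' : Q * Real.log (Q-1) ≤ Q * Real.log Q - 1 := by
    have := mul_le_mul_of_nonneg_left ha (le_of_lt h0)
    rw [mul_sub] at this
    rw [mul_one_div, div_self (ne_of_gt h0)] at this
    linarith
  nlinarith [mul_le_mul_of_nonneg_left ha' (sq_nonneg (Q-1)), hb, h0, logQ_pos hQ,
    mul_pos h0 h0]

lemma L3 {Q t : ℝ} (hQ : 3 ≤ Q) (ht : (Q-1)^2 ≤ t) : Q*(t*Real.log t) ≤ (t-1)*(t+(Q-1)) := by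
  have hT4 : (4:ℝ) ≤ (Q-1)^2 := by nlinarith
  have ht4 : (4:ℝ) ≤ t := le_trans hT4 ht
  have key : MonotoneOn (fun t : ℝ => (t-1)*(t+(Q-1)) - Q*(t*Real.log t)) (Ici ((Q-1)^2)) := by
    apply monotoneOn_of_deriv_nonneg (convex_Ici _)
    · have c1 : Continuous fun t:ℝ => (t-1)*(t+(Q-1)) := by continuity
      exact (c1.sub (continuous_const.mul Real.continuous_mul_log)).continuousOn
    · intro x hx
      rw [interior_Ici, mem_Ioi] at hx
      have hx0 : x ≠ 0 := by nlinarith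
      exact ((((hasDerivAt_id' (𝕜 := ℝ) (x := x)).sub_const 1).mul
        (((hasDerivAt_id' (𝕜 := ℝ) (x := x)).add_const (Q-1)))).sub
        ((Real.hasDerivAt_mul_log hx0).const_mul Q)).differentiableAt.differentiableWithinAt
    · intro x hx
      rw [interior_Ici, mem_Ioi] at hx
      have hx4 : (4:ℝ) < x := lt_of_le_of_lt hT4 hx
      have hx0 : x ≠ 0 := by nlinarith
      have h := ((((hasDerivAt_id' (𝕜 := ℝ) (x := x)).sub_const 1).mul
        (((hasDerivAt_id' (𝕜 := ℝ) (x := x)).add_const (Q-1)))).sub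
        ((Real.hasDerivAt_mul_log hx0).const_mul Q)).deriv
      erw [h]
      have hsq : Q - 1 ≤ Real.sqrt x := by
        have : Real.sqrt ((Q-1)^2) ≤ Real.sqrt x := Real.sqrt_le_sqrt (le_of_lt hx)
        rwa [Real.sqrt_sq (by linarith)] at this
      have hlogpos : 0 ≤ Real.log x := Real.log_nonneg (by linarith)
      have hL1 := L1' (t := x) (by linarith)
      have h1 : (Q-1) * Real.log x ≤ x - 1 :=
        le_trans (mul_le_mul_of_nonneg_right hsq hlogpos) hL1
      have h2 : 2 * Real.log x ≤ x - 1 := by nlinarith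
      nlinarith
  have hbase : 0 ≤ (((Q-1)^2-1)*((Q-1)^2+(Q-1)) - Q*((Q-1)^2*Real.log ((Q-1)^2))) := by
    rw [Real.log_pow]
    push_cast
    have := L1 (s := Q-1) (by linarith)
    nlinarith [logQ1_pos hQ]
  have h : ((Q-1)^2-1)*((Q-1)^2+(Q-1)) - Q*((Q-1)^2*Real.log ((Q-1)^2))
      ≤ (t-1)*(t+(Q-1)) - Q*(t*Real.log t) := key (self_mem_Ici) ht ht
  nlinarith [h, hbase]

lemma Lh {Q : ℝ} (hQ : 3 ≤ Q) :
    MonotoneOn (fun t : ℝ => (t+(Q-1))*Real.log t/(t-1)) (Ici ((Q-1)^2)) := by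
  have hT4 : (4:ℝ) ≤ (Q-1)^2 := by nlinarith
  apply monotoneOn_of_deriv_nonneg (convex_Ici _)
  · apply ContinuousOn.div
    · apply ContinuousOn.mul ((continuous_id.add continuous_const).continuousOn)
      exact (Real.continuousOn_log.mono (by
          intro x hx
          simp only [mem_Ici] at hx
          simp only [mem_compl_iff, mem_singleton_iff]
          nlinarith))
    · exact (continuous_id.sub continuous_const).continuousOn
    · intro x hx
      simp only [mem_Ici] at hx
      have : (4:ℝ) ≤ x := le_trans hT4 hx
      intro h; rw [sub_eq_zero] at h; linarith
  · intro x hx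
    rw [interior_Ici, mem_Ioi] at hx
    have hx4 : (4:ℝ) < x := lt_of_le_of_lt hT4 hx
    have hx0 : x ≠ 0 := by linarith
    have hx1 : x - 1 ≠ 0 := by intro h; rw [sub_eq_zero] at h; linarith
    exact ((((hasDerivAt_id' (𝕜 := ℝ) (x := x)).add_const (Q-1)).mul (Real.hasDerivAt_log hx0)).div
      ((hasDerivAt_id' (𝕜 := ℝ) (x := x)).sub_const 1) hx1).differentiableAt.differentiableWithinAt
  · intro x hx
    rw [interior_Ici, mem_Ioi] at hx
    have hx4 : (4:ℝ) < x := lt_of_le_of_lt hT4 hx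
    have hx0 : x ≠ 0 := by linarith
    have hx1 : x - 1 ≠ 0 := by intro h; rw [sub_eq_zero] at h; linarith
    have h := ((((hasDerivAt_id' (𝕜 := ℝ) (x := x)).add_const (Q-1)).mul (Real.hasDerivAt_log hx0)).div
      ((hasDerivAt_id' (𝕜 := ℝ) (x := x)).sub_const 1) hx1).deriv
    erw [h]
    have hL3 := L3 hQ (le_of_lt hx)
    have hxpos : (0:ℝ) < x := by linarith
    have hrw : (1 * Real.log x + (x+(Q-1))*x⁻¹)*(x-1) - (x+(Q-1))*Real.log x*1
        = ((x+(Q-1))*(x-1) - Q*(x*Real.log x))/x := by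
      field_simp
      ring
    erw [hrw]
    apply div_nonneg _ (sq_nonneg _)
    apply div_nonneg _ (le_of_lt hxpos)
    nlinarith [hL3]

end scalar

section ry
variable {Q x : ℝ}

lemma r_nonneg : 0 ≤ rQ Q x := Real.sqrt_nonneg _

lemma arg_nonneg (hQ : 3 ≤ Q) (hx : x ≤ thQ Q) : 0 ≤ (thQ Q)^2 - x * thQ Q := by
  nlinarith [th_pos hQ]

lemma r_sq (hQ : 3 ≤ Q) (hx : x ≤ thQ Q) : (rQ Q x)^2 = (thQ Q)^2 - x*thQ Q :=
  Real.sq_sqrt (arg_nonneg hQ hx)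

lemma r_pos (hQ : 3 ≤ Q) (hx : x < thQ Q) : 0 < rQ Q x :=
  Real.sqrt_pos.2 (by nlinarith [th_pos hQ])

lemma r_le_th (hQ : 3 ≤ Q) (hx : 0 ≤ x) : rQ Q x ≤ thQ Q := by
  have h := Real.sqrt_le_sqrt (show (thQ Q)^2 - x * thQ Q ≤ (thQ Q)^2 by nlinarith [th_pos hQ])
  rwa [Real.sqrt_sq (le_of_lt (th_pos hQ))] at h

lemma r_lt_th (hQ : 3 ≤ Q) (hx : 0 < x) : rQ Q x < thQ Q := by
  rw [rQ, Real.sqrt_lt' (th_pos hQ)]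
  nlinarith [th_pos hQ]

lemma y_nonneg (hQ : 3 ≤ Q) (hx : 0 ≤ x) : 0 ≤ yQ Q x := by
  have := r_le_th hQ hx; rw [yQ]; linarith

lemma y_pos (hQ : 3 ≤ Q) (hx : 0 < x) : 0 < yQ Q x := by
  have := r_lt_th hQ hx; rw [yQ]; linarith

lemma y_lt_th (hQ : 3 ≤ Q) (hx : x < thQ Q) : yQ Q x < thQ Q := by
  have := r_pos hQ hx; rw [yQ]; linarith

lemma y_le_th (hQ : 3 ≤ Q) : yQ Q x ≤ thQ Q := by
  have := @r_nonneg Q x; rw [yQ]; linarith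

lemma y_lt_one (hQ : 3 ≤ Q) : yQ Q x < 1 := lt_of_le_of_lt (y_le_th hQ) (th_lt_one hQ)

lemma arg_xs (hQ : 3 ≤ Q) : (thQ Q)^2 - xsQ Q * thQ Q = ((Q-2)/Q)^2 := by
  have h0 := hQ0 hQ
  have h1 : Q ≠ 0 := ne_of_gt h0
  have h2 : Q - 1 ≠ 0 := by intro h; rw [sub_eq_zero] at h; linarith [hQ1 hQ]
  rw [th_eq hQ, xsQ]
  field_simp
  ring

lemma r_xs (hQ : 3 ≤ Q) : rQ Q (xsQ Q) = (Q-2)/Q := by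
  rw [rQ, arg_xs hQ, Real.sqrt_sq (by have := hQ0 hQ; apply div_nonneg <;> linarith)]

lemma y_xs (hQ : 3 ≤ Q) : yQ Q (xsQ Q) = 1/Q := by
  have h0 := hQ0 hQ
  have h1 : Q ≠ 0 := ne_of_gt h0
  rw [yQ, r_xs hQ, th_eq hQ]
  field_simp
  ring

lemma r_antitone (hQ : 3 ≤ Q) {x₁ x₂ : ℝ} (h : x₁ ≤ x₂) : rQ Q x₂ ≤ rQ Q x₁ :=
  Real.sqrt_le_sqrt (by nlinarith [th_pos hQ])

lemma y_mono (hQ : 3 ≤ Q) {x₁ x₂ : ℝ} (h : x₁ ≤ x₂) : yQ Q x₁ ≤ yQ Q x₂ := by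
  have := r_antitone hQ (Q := Q) h; rw [yQ, yQ]; linarith

lemma y_le_invQ (hQ : 3 ≤ Q) (hx : x ≤ xsQ Q) : yQ Q x ≤ 1/Q := by
  have := y_mono hQ (Q := Q) hx; rwa [y_xs hQ] at this

lemma invQ_le_y (hQ : 3 ≤ Q) (hx : xsQ Q ≤ x) : 1/Q ≤ yQ Q x := by
  have := y_mono hQ (Q := Q) hx; rwa [y_xs hQ] at this

end ry

section values
variable {Q : ℝ}

lemma log_th (hQ : 3 ≤ Q) : Real.log (thQ Q) = Real.log (Q-1) - Real.log Q := by
  rw [th_eq hQ, Real.log_div (ne_of_gt (by linarith)) (ne_of_gt (by linarith))]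

lemma one_sub_th (hQ : 3 ≤ Q) : (1:ℝ) - thQ Q = 1/Q := by rw [thQ]; ring

lemma Hf_zero : Hf Q 0 = 0 := by simp [Hf]

lemma Hf_th (hQ : 3 ≤ Q) : Hf Q (thQ Q) = 1 := by
  have h0 := hQ0 hQ
  have hl := logQ_pos hQ
  rw [Hf, log_th hQ, one_sub_th hQ, one_div, Real.log_inv, th_eq hQ]
  field_simp
  ring

lemma Hf_invQ (hQ : 3 ≤ Q) :
    Hf Q (1/Q) = 1 - (Q-2) * Real.log (Q-1) / (Q * Real.log Q) := by
  have h0 := hQ0 hQ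
  have hl := logQ_pos hQ
  have h2 : (1:ℝ) - 1/Q = (Q-1)/Q := by field_simp
  rw [Hf, h2, one_div, Real.log_inv, Real.log_div (ne_of_gt (by linarith)) (ne_of_gt (by linarith))]
  field_simp
  ring

lemma Hd_invQ (hQ : 3 ≤ Q) : Hd Q (1/Q) = 2 * Real.log (Q-1) / Real.log Q := by
  have h0 := hQ0 hQ
  have h2 : (1:ℝ) - 1/Q = (Q-1)/Q := by field_simp
  rw [Hd, h2, one_div, Real.log_inv, Real.log_div (ne_of_gt (by linarith)) (ne_of_gt (by linarith))]
  ring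

lemma Hd_th (hQ : 3 ≤ Q) : Hd Q (thQ Q) = 0 := by
  rw [Hd, log_th hQ, one_sub_th hQ, one_div, Real.log_inv]
  ring_nf

end values

section derivs
variable {Q y x : ℝ}

lemma hasDerivAt_Hf (h0 : 0 < y) (h1 : y < 1) : HasDerivAt (Hf Q) (Hd Q y) y := by
  have hy : y ≠ 0 := ne_of_gt h0
  have hy1 : (1:ℝ) - y ≠ 0 := by intro h; rw [sub_eq_zero] at h; exact absurd h.symm (ne_of_lt h1)
  have d1 : HasDerivAt (fun y : ℝ => y * Real.log (Q-1)) (Real.log (Q-1)) y := by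
    simpa using (hasDerivAt_id' (𝕜 := ℝ) (x := y)).mul_const (Real.log (Q-1))
  have d2 : HasDerivAt (fun y : ℝ => y * Real.log y) (Real.log y + 1) y :=
    Real.hasDerivAt_mul_log hy
  have d3 : HasDerivAt (fun y : ℝ => (1-y) * Real.log (1-y)) (-(Real.log (1-y) + 1)) y := by
    have := (Real.hasDerivAt_mul_log hy1).comp y
      ((hasDerivAt_id' (𝕜 := ℝ) (x := y)).const_sub 1)
    simpa [Function.comp_def] using this
  have := ((d1.sub d2).sub d3).div_const (Real.log Q)
  refine this.congr_deriv ?_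
  simp only [Hd]; ring

lemma hasDerivAt_Hd (h0 : 0 < y) (h1 : y < 1) :
    HasDerivAt (Hd Q) (-(1/(y*(1-y)))/Real.log Q) y := by
  have hy : y ≠ 0 := ne_of_gt h0
  have hy1 : (1:ℝ) - y ≠ 0 := by intro h; rw [sub_eq_zero] at h; exact absurd h.symm (ne_of_lt h1)
  have d1 : HasDerivAt (fun y : ℝ => Real.log y) y⁻¹ y := Real.hasDerivAt_log hy
  have d2 : HasDerivAt (fun y : ℝ => Real.log (1-y)) ((1-y)⁻¹ * (-1)) y := by
    have := (Real.hasDerivAt_log hy1).comp y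
      ((hasDerivAt_id' (𝕜 := ℝ) (x := y)).const_sub 1)
    simpa [Function.comp_def] using this
  have := (((hasDerivAt_const y (Real.log (Q-1))).sub d1).add d2).div_const (Real.log Q)
  refine this.congr_deriv ?_
  field_simp
  ring

lemma hasDerivAt_r (hQ : 3 ≤ Q) (hx : x < thQ Q) :
    HasDerivAt (rQ Q) (-(thQ Q/(2 * rQ Q x))) x := by
  have harg : (thQ Q)^2 - x * thQ Q ≠ 0 := by nlinarith [th_pos hQ]
  have inner : HasDerivAt (fun x : ℝ => (thQ Q)^2 - x * thQ Q) (-thQ Q) x := by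
    simpa using ((hasDerivAt_id' (𝕜 := ℝ) (x := x)).mul_const (thQ Q)).const_sub ((thQ Q)^2)
  have := (Real.hasDerivAt_sqrt harg).comp x inner
  have heq : rQ Q = fun x => Real.sqrt ((thQ Q)^2 - x * thQ Q) := rfl
  rw [heq]
  refine this.congr_deriv ?_
  show 1 / (2 * rQ Q x) * -thQ Q = -(thQ Q/(2 * rQ Q x))
  ring

lemma hasDerivAt_y (hQ : 3 ≤ Q) (hx : x < thQ Q) :
    HasDerivAt (yQ Q) (thQ Q/(2 * rQ Q x)) x := by
  have := (hasDerivAt_r hQ hx).const_sub (thQ Q)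
  have heq : yQ Q = fun x => thQ Q - rQ Q x := rfl
  rw [heq]
  refine this.congr_deriv ?_
  ring

lemma hasDerivAt_Bf (hQ : 3 ≤ Q) (hx0 : 0 < x) (hx1 : x < thQ Q) :
    HasDerivAt (Bf Q) (DL Q x) x := by
  have hy0 : 0 < yQ Q x := y_pos hQ hx0
  have hy1 : yQ Q x < 1 := y_lt_one hQ
  have dH := hasDerivAt_Hf (Q := Q) hy0 hy1
  have dy := hasDerivAt_y hQ hx1
  have comp := dH.comp x dy
  have := comp.const_sub 1
  have heq : Bf Q = fun x => 1 - Hf Q (yQ Q x) := rfl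
  rw [heq]
  refine this.congr_deriv ?_
  simp only [DL]
  ring

lemma hasDerivAt_linf : HasDerivAt (linf Q) (-slp Q) x := by
  have := ((hasDerivAt_id' (𝕜 := ℝ) (x := x)).const_sub (thQ Q)).mul_const (slp Q)
  have heq : linf Q = fun x => (thQ Q - x) * slp Q := rfl
  rw [heq]
  refine this.congr_deriv ?_
  ring

lemma hasDerivAt_psif (h0 : 0 < y) (h1 : y < 1) : HasDerivAt (psif Q) (dpsi Q y) y := by
  have q1 : HasDerivAt (fun y : ℝ => (2 * thQ Q * y - y^2)/(thQ Q)^2)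
      ((2 * thQ Q - 2*y)/(thQ Q)^2) y := by
    have h2 : HasDerivAt (fun y : ℝ => 2 * thQ Q * y - y^2) (2 * thQ Q - 2*y) y := by
      have := ((hasDerivAt_id' (𝕜 := ℝ) (x := y)).const_mul (2 * thQ Q)).sub
        (hasDerivAt_pow 2 y)
      refine this.congr_deriv ?_
      push_cast
      ring
    exact h2.div_const _
  have := (hasDerivAt_Hf (Q := Q) h0 h1).sub q1
  have heq : psif Q = fun y => Hf Q y - (2 * thQ Q * y - y^2)/(thQ Q)^2 := rfl
  rw [heq]
  refine this.congr_deriv ?_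
  all_goals (simp only [dpsi])

lemma hasDerivAt_dpsi (h0 : 0 < y) (h1 : y < 1) :
    HasDerivAt (dpsi Q) (-(1/(y*(1-y)))/Real.log Q + 2/(thQ Q)^2) y := by
  have q1 : HasDerivAt (fun y : ℝ => (2 * thQ Q - 2*y)/(thQ Q)^2) (-2/(thQ Q)^2) y := by
    have h2 : HasDerivAt (fun y : ℝ => 2 * thQ Q - 2*y) (-2) y := by
      have := ((hasDerivAt_id' (𝕜 := ℝ) (x := y)).const_mul 2).const_sub (2 * thQ Q)
      refine this.congr_deriv ?_
      ring
    have := h2.div_const ((thQ Q)^2)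
    exact this
  have := (hasDerivAt_Hd (Q := Q) h0 h1).sub q1
  have heq : dpsi Q = fun y => Hd Q y - (2 * thQ Q - 2*y)/(thQ Q)^2 := rfl
  rw [heq]
  refine this.congr_deriv ?_
  ring

lemma hasDerivAt_Ff (h0 : 0 < y) (h1 : y < 1) : HasDerivAt (Ff Q) (dF Q y) y := by
  have q1 : HasDerivAt (fun y : ℝ => Kc Q * (thQ Q - y)^2)
      (Kc Q * (2 * (thQ Q - y) * (-1))) y := by
    have h2 : HasDerivAt (fun y : ℝ => (thQ Q - y)^2) (2 * (thQ Q - y)^1 * (-1)) y :=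
      ((hasDerivAt_id' (𝕜 := ℝ) (x := y)).const_sub (thQ Q)).pow 2
    have := h2.const_mul (Kc Q)
    refine this.congr_deriv ?_
    push_cast
    ring
  have := ((hasDerivAt_Hf (Q := Q) h0 h1).const_sub 1).sub q1
  have heq : Ff Q = fun y => (1 - Hf Q y) - Kc Q * (thQ Q - y)^2 := rfl
  rw [heq]
  refine this.congr_deriv ?_
  all_goals (simp only [dF]; ring)

lemma hasDerivAt_dF (h0 : 0 < y) (h1 : y < 1) :
    HasDerivAt (dF Q) (1/(y*(1-y))/Real.log Q - 2 * Kc Q) y := by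
  have q1 : HasDerivAt (fun y : ℝ => 2 * Kc Q * (thQ Q - y)) (2 * Kc Q * (-1)) y := by
    have := ((hasDerivAt_id' (𝕜 := ℝ) (x := y)).const_sub (thQ Q)).const_mul (2 * Kc Q)
    simpa using this
  have := ((hasDerivAt_Hd (Q := Q) h0 h1).neg).add q1
  have heq : dF Q = fun y => -Hd Q y + 2 * Kc Q * (thQ Q - y) := rfl
  rw [heq]
  refine this.congr_deriv ?_
  field_simp
  ring

end derivs

section junction
variable {Q x : ℝ}

lemma Hlq (hQ : 3 ≤ Q) : Real.logb Q (Q-1) = Real.log (Q-1) / Real.log Q := rfl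

lemma nonzeros (hQ : 3 ≤ Q) :
    Q ≠ 0 ∧ Q - 1 ≠ 0 ∧ Q - 2 ≠ 0 ∧ Real.log Q ≠ 0 :=
  ⟨ne_of_gt (hQ0 hQ), ne_of_gt (by linarith), ne_of_gt (by linarith),
    ne_of_gt (logQ_pos hQ)⟩

lemma Bf_xs (hQ : 3 ≤ Q) : Bf Q (xsQ Q) = (Q-2) * Real.log (Q-1) / (Q * Real.log Q) := by
  rw [Bf, y_xs hQ, Hf_invQ hQ]; ring

lemma linf_xs (hQ : 3 ≤ Q) : linf Q (xsQ Q) = (Q-2) * Real.log (Q-1) / (Q * Real.log Q) := by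
  obtain ⟨h1, h2, h3, h4⟩ := nonzeros hQ
  rw [linf, slp, xsQ, th_eq hQ, Hlq hQ]
  field_simp
  ring

lemma B_eq_lin_xs (hQ : 3 ≤ Q) : Bf Q (xsQ Q) = linf Q (xsQ Q) := by
  rw [Bf_xs hQ, linf_xs hQ]

lemma DL_xs (hQ : 3 ≤ Q) : DL Q (xsQ Q) = -slp Q := by
  obtain ⟨h1, h2, h3, h4⟩ := nonzeros hQ
  rw [DL, y_xs hQ, r_xs hQ, Hd_invQ hQ, slp, th_eq hQ, Hlq hQ]
  field_simp

lemma slp_th (hQ : 3 ≤ Q) : slp Q * thQ Q = Kc Q * (thQ Q)^2 := by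
  obtain ⟨h1, h2, h3, h4⟩ := nonzeros hQ
  rw [slp, Kc, th_eq hQ, Hlq hQ]
  field_simp

lemma r_eq (hQ : 3 ≤ Q) : rQ Q x = thQ Q - yQ Q x := by rw [yQ]; ring

lemma alg1 {Q y L M : ℝ} (h1 : Q ≠ 0) (hy : y ≠ 0)
    (hA : (Q-1) - Q*y ≠ 0) (hB : (Q-1)*(1-y) - y ≠ 0) (hL : L ≠ 0) :
    -((Q-1)/Q/(2*((Q-1)/Q - y))) * (M/L)
      = -(((Q-1)*(1-y)/y + (Q-1)) * M / ((Q-1)*(1-y)/y - 1) / (2*L)) := by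
  rw [div_sub' hy, div_add' _ _ _ hy, div_div_eq_mul_div]
  rw [show (Q-1)/Q - y = ((Q-1) - Q*y)/Q by field_simp]
  have hB' : (Q - 1) * (1 - y) - y * 1 ≠ 0 := by simpa using hB
  field_simp
  ring

lemma DL_formula (hQ : 3 ≤ Q) (hx0 : 0 < x) (hxs : x ≤ xsQ Q) :
    DL Q x = -((((Q-1)*(1 - yQ Q x)/(yQ Q x) + (Q-1)) *
      Real.log ((Q-1)*(1 - yQ Q x)/(yQ Q x)) /
      ((Q-1)*(1 - yQ Q x)/(yQ Q x) - 1)) / (2 * Real.log Q)) := by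
  obtain ⟨h1, h2, h3, h4⟩ := nonzeros hQ
  have hxth : x < thQ Q := lt_of_le_of_lt hxs (xs_lt_th hQ)
  have hy0 : 0 < yQ Q x := y_pos hQ hx0
  have hyq : yQ Q x ≤ 1/Q := y_le_invQ hQ hxs
  have hy1 : yQ Q x < 1 := y_lt_one hQ
  have hy1' : (0:ℝ) < 1 - yQ Q x := by linarith
  have hr : 0 < rQ Q x := r_pos hQ hxth
  have hQy : Q * yQ Q x ≤ 1 := by
    have := mul_le_mul_of_nonneg_left hyq (le_of_lt (hQ0 hQ))
    rw [mul_one_div, div_self h1] at this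
    exact this
  have hlog : Real.log ((Q-1)*(1 - yQ Q x)/(yQ Q x))
      = Real.log (Q-1) - Real.log (yQ Q x) + Real.log (1-yQ Q x) := by
    rw [Real.log_div (mul_ne_zero h2 (ne_of_gt hy1')) (ne_of_gt hy0),
      Real.log_mul h2 (ne_of_gt hy1')]
    ring
  have hrw : rQ Q x = thQ Q - yQ Q x := r_eq hQ
  have htm1 : (Q-1)*(1 - yQ Q x)/(yQ Q x) - 1 ≠ 0 := by
    rw [div_sub' (ne_of_gt hy0)]
    apply div_ne_zero _ (ne_of_gt hy0)
    nlinarith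
  have hnum : (Q-1)*(1 - yQ Q x) - yQ Q x ≠ 0 := by nlinarith
  have hA : (Q-1) - Q * yQ Q x ≠ 0 := by nlinarith
  rw [DL, Hd, hlog, hrw, th_eq hQ]
  exact alg1 h1 (ne_of_gt hy0) hA hnum h4

lemma t_mem (hQ : 3 ≤ Q) (hx0 : 0 < x) (hxs : x ≤ xsQ Q) :
    (Q-1)^2 ≤ (Q-1)*(1 - yQ Q x)/(yQ Q x) := by
  have hy0 : 0 < yQ Q x := y_pos hQ hx0
  have hyq : yQ Q x ≤ 1/Q := y_le_invQ hQ hxs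
  have hQy : Q * yQ Q x ≤ 1 := by
    have := mul_le_mul_of_nonneg_left hyq (le_of_lt (hQ0 hQ))
    rw [mul_one_div, div_self (ne_of_gt (hQ0 hQ))] at this
    exact this
  rw [le_div_iff₀ hy0]
  nlinarith

lemma DL_mono (hQ : 3 ≤ Q) {x₁ x₂ : ℝ} (h1 : x₁ ∈ Ioc 0 (xsQ Q))
    (h2 : x₂ ∈ Ioc 0 (xsQ Q)) (h12 : x₁ ≤ x₂) : DL Q x₁ ≤ DL Q x₂ := by
  set y₁ := yQ Q x₁ with hy₁
  set y₂ := yQ Q x₂ with hy₂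
  have hy10 : 0 < y₁ := y_pos hQ h1.1
  have hy20 : 0 < y₂ := y_pos hQ h2.1
  have hy12 : y₁ ≤ y₂ := y_mono hQ h12
  have hy21 : y₂ < 1 := y_lt_one hQ
  set t₁ := (Q-1)*(1 - y₁)/y₁ with ht₁
  set t₂ := (Q-1)*(1 - y₂)/y₂ with ht₂
  have htm1 : (Q-1)^2 ≤ t₁ := t_mem hQ h1.1 h1.2
  have htm2 : (Q-1)^2 ≤ t₂ := t_mem hQ h2.1 h2.2
  have ht21 : t₂ ≤ t₁ := by
    rw [ht₁, ht₂, div_le_div_iff₀ hy20 hy10]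
    nlinarith
  have hmono := Lh hQ htm2 htm1 ht21
  simp only at hmono
  rw [DL_formula hQ h1.1 h1.2, DL_formula hQ h2.1 h2.2]
  apply neg_le_neg
  have h2L : (0:ℝ) < 2 * Real.log Q := by linarith [logQ_pos hQ]
  exact (div_le_div_iff_of_pos_right h2L).2 hmono

lemma Dfun_mono (hQ : 3 ≤ Q) : MonotoneOn (Dfun Q) (Ioo 0 (thQ Q)) := by
  intro a ha b hb hab
  by_cases hax : a ≤ xsQ Q <;> by_cases hbx : b ≤ xsQ Q
  · rw [Dfun, Dfun, if_pos hax, if_pos hbx]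
    exact DL_mono hQ ⟨ha.1, hax⟩ ⟨hb.1, hbx⟩ hab
  · rw [Dfun, Dfun, if_pos hax, if_neg hbx]
    rw [← DL_xs hQ]
    exact DL_mono hQ ⟨ha.1, hax⟩ ⟨xs_pos hQ, le_refl _⟩ hax
  · exact absurd (le_trans hab hbx) hax
  · rw [Dfun, Dfun, if_neg hax, if_neg hbx]

end junction

section helpers

lemma monoOn_of_derivpt {f df : ℝ → ℝ} {a b : ℝ}
    (hc : ContinuousOn f (Icc a b))
    (hd : ∀ y ∈ Ioo a b, HasDerivAt f (df y) y)
    (h0 : ∀ y ∈ Ioo a b, 0 ≤ df y) : MonotoneOn f (Icc a b) := by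
  apply monotoneOn_of_deriv_nonneg (convex_Icc a b) hc
  · intro y hy
    rw [interior_Icc] at hy
    exact (hd y hy).differentiableAt.differentiableWithinAt
  · intro y hy
    rw [interior_Icc] at hy
    rw [(hd y hy).deriv]
    exact h0 y hy

lemma antiOn_of_derivpt {f df : ℝ → ℝ} {a b : ℝ}
    (hc : ContinuousOn f (Icc a b))
    (hd : ∀ y ∈ Ioo a b, HasDerivAt f (df y) y)
    (h0 : ∀ y ∈ Ioo a b, df y ≤ 0) : AntitoneOn f (Icc a b) := by
  apply antitoneOn_of_deriv_nonpos (convex_Icc a b) hc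
  · intro y hy
    rw [interior_Icc] at hy
    exact (hd y hy).differentiableAt.differentiableWithinAt
  · intro y hy
    rw [interior_Icc] at hy
    rw [(hd y hy).deriv]
    exact h0 y hy

lemma concaveOn_of_derivpt {f df ddf : ℝ → ℝ} {a b : ℝ}
    (hc : ContinuousOn f (Icc a b))
    (hd : ∀ y ∈ Ioo a b, HasDerivAt f (df y) y)
    (hdd : ∀ y ∈ Ioo a b, HasDerivAt df (ddf y) y)
    (h0 : ∀ y ∈ Ioo a b, ddf y ≤ 0) : ConcaveOn ℝ (Icc a b) f := by
  have hanti : AntitoneOn df (Ioo a b) := by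
    apply antitoneOn_of_deriv_nonpos (convex_Ioo a b)
    · exact fun y hy => (hdd y hy).continuousAt.continuousWithinAt
    · intro y hy
      rw [interior_Ioo] at hy
      exact (hdd y hy).differentiableAt.differentiableWithinAt
    · intro y hy
      rw [interior_Ioo] at hy
      rw [(hdd y hy).deriv]
      exact h0 y hy
  apply AntitoneOn.concaveOn_of_deriv (convex_Icc a b) hc
  · intro y hy
    rw [interior_Icc] at hy
    exact (hd y hy).differentiableAt.differentiableWithinAt
  · intro z hz z' hz' hzz'
    rw [interior_Icc] at hz hz'
    rw [(hd z hz).deriv, (hd z' hz').deriv]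
    exact hanti hz hz' hzz'

end helpers

lemma nonneg_of_concaveOn {f : ℝ → ℝ} {a b : ℝ} (hab : a ≤ b)
    (hc : ConcaveOn ℝ (Icc a b) f) (ha : 0 ≤ f a) (hb : 0 ≤ f b) :
    ∀ x ∈ Icc a b, 0 ≤ f x := by
  intro x hx
  rw [← segment_eq_Icc hab] at hx
  obtain ⟨u, v, hu, hv, huv, rfl⟩ := hx
  have h1 := hc.2 (left_mem_Icc.2 hab) (right_mem_Icc.2 hab) hu hv huv
  have h2 : 0 ≤ u * f a + v * f b := add_nonneg (mul_nonneg hu ha) (mul_nonneg hv hb)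
  simpa [smul_eq_mul] using le_trans h2 h1

section contf
variable {Q : ℝ}

lemma Hf_cont : Continuous (Hf Q) := by
  apply Continuous.div_const
  exact ((continuous_id.mul continuous_const).sub Real.continuous_mul_log).sub
    (Real.continuous_mul_log.comp (continuous_const.sub continuous_id))

lemma psif_cont : Continuous (psif Q) :=
  Hf_cont.sub ((by continuity : Continuous fun y:ℝ => 2*thQ Q*y - y^2).div_const _)

lemma Ff_cont : Continuous (Ff Q) :=
  (continuous_const.sub Hf_cont).sub
    (continuous_const.mul ((continuous_const.sub continuous_id).pow 2))

end contf

section secderiv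
variable {Q : ℝ}

lemma ddpsi_nonpos (hQ : 3 ≤ Q) {y : ℝ} (h0 : 0 < y) (h1 : y < 1)
    (hb : y*(1-y) ≤ (thQ Q)^2/(2*Real.log Q)) :
    -(1/(y*(1-y)))/Real.log Q + 2/(thQ Q)^2 ≤ 0 := by
  have hu : 0 < y*(1-y) := by nlinarith
  have hT := th_pos hQ
  have hL := logQ_pos hQ
  have he : -(1/(y*(1-y)))/Real.log Q + 2/(thQ Q)^2
      = (2*Real.log Q*(y*(1-y)) - (thQ Q)^2)/(Real.log Q*(y*(1-y))*(thQ Q)^2) := by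
    have hy1' : (1:ℝ) - y ≠ 0 := by linarith
    field_simp
    ring
  rw [he]
  apply div_nonpos_of_nonpos_of_nonneg
  · rw [le_div_iff₀ (by positivity)] at hb
    nlinarith
  · positivity

lemma ddpsi_nonneg (hQ : 3 ≤ Q) {y : ℝ} (h0 : 0 < y) (h1 : y < 1)
    (hb : (thQ Q)^2/(2*Real.log Q) ≤ y*(1-y)) :
    0 ≤ -(1/(y*(1-y)))/Real.log Q + 2/(thQ Q)^2 := by
  have hu : 0 < y*(1-y) := by nlinarith
  have hT := th_pos hQ
  have hL := logQ_pos hQ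
  have he : -(1/(y*(1-y)))/Real.log Q + 2/(thQ Q)^2
      = (2*Real.log Q*(y*(1-y)) - (thQ Q)^2)/(Real.log Q*(y*(1-y))*(thQ Q)^2) := by
    have hy1' : (1:ℝ) - y ≠ 0 := by linarith
    field_simp
    ring
  rw [he]
  apply div_nonneg _ (by positivity)
  rw [div_le_iff₀ (by positivity)] at hb
  nlinarith

lemma ddF_nonneg (hQ : 3 ≤ Q) {y : ℝ} (h0 : 0 < y) (h1 : y < 1)
    (hb : y*(1-y) ≤ (Q-2)/(2*Q*Real.log (Q-1))) :
    0 ≤ 1/(y*(1-y))/Real.log Q - 2*Kc Q := by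
  have hu : 0 < y*(1-y) := by nlinarith
  have hL := logQ_pos hQ
  have hA := logQ1_pos hQ
  have h0' := hQ0 hQ
  have h2 : (0:ℝ) < Q - 2 := by linarith
  have he : 1/(y*(1-y))/Real.log Q - 2*Kc Q
      = ((Q-2) - 2*Q*Real.log (Q-1)*(y*(1-y)))/((y*(1-y))*((Q-2)*Real.log Q)) := by
    rw [Kc]
    have hy1' : (1:ℝ) - y ≠ 0 := by linarith
    field_simp
  rw [he]
  apply div_nonneg _ (le_of_lt (mul_pos hu (mul_pos h2 hL)))
  rw [le_div_iff₀ (by positivity)] at hb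
  nlinarith

lemma ddF_nonpos (hQ : 3 ≤ Q) {y : ℝ} (h0 : 0 < y) (h1 : y < 1)
    (hb : (Q-2)/(2*Q*Real.log (Q-1)) ≤ y*(1-y)) :
    1/(y*(1-y))/Real.log Q - 2*Kc Q ≤ 0 := by
  have hu : 0 < y*(1-y) := by nlinarith
  have hL := logQ_pos hQ
  have hA := logQ1_pos hQ
  have h0' := hQ0 hQ
  have h2 : (0:ℝ) < Q - 2 := by linarith
  have he : 1/(y*(1-y))/Real.log Q - 2*Kc Q
      = ((Q-2) - 2*Q*Real.log (Q-1)*(y*(1-y)))/((y*(1-y))*((Q-2)*Real.log Q)) := by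
    rw [Kc]
    have hy1' : (1:ℝ) - y ≠ 0 := by linarith
    field_simp
  rw [he]
  apply div_nonpos_of_nonpos_of_nonneg _ (le_of_lt (mul_pos hu (mul_pos h2 hL)))
  rw [div_le_iff₀ (by positivity)] at hb
  nlinarith

end secderiv

section psiF
variable {Q : ℝ}

lemma psif_invQ_nonneg (hQ : 3 ≤ Q) : 0 ≤ psif Q (1/Q) := by
  have h0 := hQ0 hQ
  have hL := logQ_pos hQ
  have hA := logQ1_pos hQ
  have hL2 := L2 hQ
  obtain ⟨h1, h2, h3, h4⟩ := nonzeros hQ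
  rw [psif, Hf_invQ hQ]
  have hq1 : (2 * thQ Q * (1/Q) - (1/Q)^2)/(thQ Q)^2 = (2*Q-3)/(Q-1)^2 := by
    rw [th_eq hQ]
    field_simp
    ring
  rw [hq1]
  have key : (Q-2)*Real.log (Q-1)/(Q*Real.log Q) ≤ (Q-2)^2/(Q-1)^2 := by
    rw [div_le_div_iff₀ (mul_pos h0 hL) (by nlinarith)]
    nlinarith [mul_le_mul_of_nonneg_left hL2 (show (0:ℝ) ≤ Q-2 by linarith)]
  have key2 : (2*Q-3)/(Q-1)^2 + (Q-2)^2/(Q-1)^2 = 1 := by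
    field_simp
    ring
  linarith

lemma dpsi_invQ_nonpos (hQ : 3 ≤ Q) : dpsi Q (1/Q) ≤ 0 := by
  have h0 := hQ0 hQ
  have hL := logQ_pos hQ
  have hL2 := L2 hQ
  obtain ⟨h1, h2, h3, h4⟩ := nonzeros hQ
  rw [dpsi, Hd_invQ hQ]
  have hq1 : (2*thQ Q - 2*(1/Q))/(thQ Q)^2 = 2*Q*(Q-2)/(Q-1)^2 := by
    rw [th_eq hQ]
    field_simp
    ring
  rw [hq1, sub_nonpos, div_le_div_iff₀ hL (by nlinarith)]
  nlinarith

set_option maxHeartbeats 1000000 in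
lemma psi_nonneg (hQ : 3 ≤ Q) : ∀ y ∈ Icc 0 (1/Q), 0 ≤ psif Q y := by
  have h0 := hQ0 hQ
  obtain ⟨hn1, hn2, hn3, hn4⟩ := nonzeros hQ
  have hL := logQ_pos hQ
  have hT := th_pos hQ
  set m := (thQ Q)^2/(2*Real.log Q) with hm
  have hm0 : 0 < m := by positivity
  set w := Real.sqrt (max (1/4 - m) 0) with hw
  have hw0 : 0 ≤ w := Real.sqrt_nonneg _
  have hwsq : w^2 = max (1/4 - m) 0 := Real.sq_sqrt (le_max_right _ _)
  have hwlt : w < 1/2 := by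
    have hmax : max (1/4 - m) 0 < (1/2)^2 := by
      rcases max_cases (1/4 - m) 0 with ⟨he, _⟩ | ⟨he, _⟩ <;> rw [he] <;> nlinarith
    nlinarith
  set z := 1/2 - w with hz
  have hz0 : 0 < z := by rw [hz]; linarith
  have hQinv : (1:ℝ)/Q ≤ 1/3 := by
    rw [div_le_div_iff₀ h0 (by norm_num)]; linarith
  have hQinv0 : (0:ℝ) < 1/Q := by positivity
  have hpsi0 : psif Q 0 = 0 := by simp [psif, Hf_zero]
  have hpsiq := psif_invQ_nonneg hQ
  set b := min z (1/Q) with hb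
  have hb0 : 0 < b := lt_min hz0 hQinv0
  have hbz : b ≤ z := min_le_left _ _
  have hbq : b ≤ 1/Q := min_le_right _ _
  have hconc : ConcaveOn ℝ (Icc 0 b) (psif Q) := by
    apply concaveOn_of_derivpt psif_cont.continuousOn
      (df := dpsi Q) (ddf := fun y => -(1/(y*(1-y)))/Real.log Q + 2/(thQ Q)^2)
    · intro u hu
      exact hasDerivAt_psif hu.1 (by linarith [hu.2, hQinv, hbq])
    · intro u hu
      exact hasDerivAt_dpsi hu.1 (by linarith [hu.2, hQinv, hbq])
    · intro u hu
      have hu1 : u < 1 := by linarith [hu.2, hQinv, hbq]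
      apply ddpsi_nonpos hQ hu.1 hu1
      have huz : u ≤ z := le_trans (le_of_lt hu.2) hbz
      have h12 : w ≤ 1/2 - u := by rw [hz] at huz; linarith
      have hsq : w^2 ≤ (1/2 - u)^2 := by nlinarith
      have hge : (1:ℝ)/4 - m ≤ max (1/4 - m) 0 := le_max_left _ _
      rw [← hm]
      nlinarith [hwsq]
  rcases le_or_gt (1/Q : ℝ) z with hcase | hcase
  · have hbq' : b = 1/Q := min_eq_right hcase
    rw [hbq'] at hconc
    exact nonneg_of_concaveOn (le_of_lt hQinv0) hconc (le_of_eq hpsi0.symm) hpsiq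
  · have hbz' : b = z := min_eq_left (le_of_lt hcase)
    rw [hbz'] at hconc
    have hwpos : 0 < w := by rw [hz] at hcase; linarith [hQinv]
    have hmaxeq : max (1/4 - m) 0 = 1/4 - m := by
      rcases max_cases (1/4 - m) 0 with ⟨he, _⟩ | ⟨he, hle⟩
      · exact he
      · exfalso
        rw [he] at hwsq
        nlinarith
    have hanti : AntitoneOn (psif Q) (Icc z (1/Q)) := by
      have hmono : MonotoneOn (dpsi Q) (Icc z (1/Q)) := by
        apply monoOn_of_derivpt (df := fun y => -(1/(y*(1-y)))/Real.log Q + 2/(thQ Q)^2)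
        · intro u hu
          have hu0 : 0 < u := lt_of_lt_of_le hz0 hu.1
          exact (hasDerivAt_dpsi hu0 (by linarith [hu.2, hQinv])).continuousAt.continuousWithinAt
        · intro u hu
          have hu0 : 0 < u := lt_trans hz0 hu.1
          exact hasDerivAt_dpsi hu0 (by linarith [hu.2, hQinv])
        · intro u hu
          have hu0 : 0 < u := lt_trans hz0 hu.1
          have hu1 : u < 1 := by linarith [hu.2, hQinv]
          apply ddpsi_nonneg hQ hu0 hu1
          have h12 : 1/2 - u < w := by
            have := hu.1
            rw [hz] at this
            linarith
          have h12' : (0:ℝ) < 1/2 - u := by linarith [hu.2, hQinv]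
          have hsq : (1/2 - u)^2 < w^2 := by nlinarith
          rw [hwsq, hmaxeq] at hsq
          rw [← hm]
          nlinarith
      have hdle : ∀ u ∈ Icc z (1/Q), dpsi Q u ≤ 0 := by
        intro u hu
        have := hmono hu (right_mem_Icc.2 (le_of_lt hcase)) hu.2
        linarith [dpsi_invQ_nonpos hQ]
      apply antiOn_of_derivpt psif_cont.continuousOn (df := dpsi Q)
      · intro u hu
        have hu0 : 0 < u := lt_trans hz0 hu.1
        exact hasDerivAt_psif hu0 (by linarith [hu.2, hQinv])
      · intro u hu
        exact hdle u ⟨le_of_lt hu.1, le_of_lt hu.2⟩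
    have hpsiz : ∀ u ∈ Icc z (1/Q), 0 ≤ psif Q u := by
      intro u hu
      have := hanti hu (right_mem_Icc.2 (le_of_lt hcase)) hu.2
      linarith [hpsiq]
    intro u hu
    rcases le_or_gt u z with huz | huz
    · exact nonneg_of_concaveOn (le_of_lt hz0) hconc (le_of_eq hpsi0.symm)
        (hpsiz z (left_mem_Icc.2 (le_of_lt hcase))) u ⟨hu.1, huz⟩
    · exact hpsiz u ⟨le_of_lt huz, hu.2⟩

lemma Ff_invQ (hQ : 3 ≤ Q) : Ff Q (1/Q) = 0 := by
  obtain ⟨h1, h2, h3, h4⟩ := nonzeros hQ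
  rw [Ff, Hf_invQ hQ, Kc, th_eq hQ]
  field_simp
  ring

lemma Ff_th (hQ : 3 ≤ Q) : Ff Q (thQ Q) = 0 := by
  rw [Ff, Hf_th hQ]
  ring

lemma dF_invQ (hQ : 3 ≤ Q) : dF Q (1/Q) = 0 := by
  obtain ⟨h1, h2, h3, h4⟩ := nonzeros hQ
  rw [dF, Hd_invQ hQ, Kc, th_eq hQ]
  field_simp
  ring

lemma dF_th (hQ : 3 ≤ Q) : dF Q (thQ Q) = 0 := by
  rw [dF, Hd_th hQ]
  ring

set_option maxHeartbeats 1000000 in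
lemma F_nonneg (hQ : 3 ≤ Q) : ∀ y ∈ Icc (1/Q) (thQ Q), 0 ≤ Ff Q y := by
  have h0 := hQ0 hQ
  obtain ⟨hn1, hn2, hn3, hn4⟩ := nonzeros hQ
  have hL := logQ_pos hQ
  have hA := logQ1_pos hQ
  have hT := th_pos hQ
  have hT1 := th_lt_one hQ
  set m := (Q-2)/(2*Q*Real.log (Q-1)) with hm
  have hm0 : 0 < m := div_pos (by linarith) (by positivity)
  set w := Real.sqrt (max (1/4 - m) 0) with hw
  have hw0 : 0 ≤ w := Real.sqrt_nonneg _
  have hwsq : w^2 = max (1/4 - m) 0 := Real.sq_sqrt (le_max_right _ _)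
  have hQinv : (1:ℝ)/Q ≤ 1/3 := by
    rw [div_le_div_iff₀ h0 (by norm_num)]; linarith
  have hQinv0 : (0:ℝ) < 1/Q := by positivity
  have hmQ : (1/Q)*(1-1/Q) ≤ m := by
    have hL1 := L1 (s := Q-1) (by linarith)
    have he : (1/Q)*(1-1/Q) = (Q-1)/Q^2 := by field_simp
    rw [he, hm, div_le_div_iff₀ (by positivity) (by positivity)]
    nlinarith
  have hwle : w ≤ 1/2 - 1/Q := by
    have h1 : max (1/4 - m) 0 ≤ (1/2 - 1/Q)^2 := by
      apply max_le
      · nlinarith [hmQ]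
      · positivity
    calc w = Real.sqrt (max (1/4 - m) 0) := hw
      _ ≤ Real.sqrt ((1/2 - 1/Q)^2) := Real.sqrt_le_sqrt h1
      _ = 1/2 - 1/Q := Real.sqrt_sq (by linarith [hQinv])
  set y₁ := 1/2 - w with hy1
  set y₂ := 1/2 + w with hy2
  have hy1Q : 1/Q ≤ y₁ := by rw [hy1]; linarith
  have hy2T : y₂ ≤ thQ Q := by rw [hy2, thQ]; linarith
  have hy10 : 0 < y₁ := lt_of_lt_of_le hQinv0 hy1Q
  have hy21 : y₂ < 1 := lt_of_le_of_lt hy2T hT1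
  have hy12 : y₁ ≤ y₂ := by rw [hy1, hy2]; linarith
  have hy1half : y₁ ≤ 1/2 := by rw [hy1]; linarith
  have hy2half : 1/2 ≤ y₂ := by rw [hy2]; linarith
  have hP1 : ∀ u ∈ Icc (1/Q) y₁, 0 ≤ Ff Q u := by
    have hmono : MonotoneOn (dF Q) (Icc (1/Q) y₁) := by
      apply monoOn_of_derivpt (df := fun u => 1/(u*(1-u))/Real.log Q - 2*Kc Q)
      · intro u hu
        have hu0 : 0 < u := lt_of_lt_of_le hQinv0 hu.1
        exact (hasDerivAt_dF hu0 (by linarith [hu.2, hy1half])).continuousAt.continuousWithinAt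
      · intro u hu
        have hu0 : 0 < u := lt_trans hQinv0 hu.1
        exact hasDerivAt_dF hu0 (by linarith [hu.2, hy1half])
      · intro u hu
        have hu0 : 0 < u := lt_trans hQinv0 hu.1
        have hu1 : u < 1 := by linarith [hu.2, hy1half]
        apply ddF_nonneg hQ hu0 hu1
        have h12 : w ≤ 1/2 - u := by
          have := hu.2
          rw [hy1] at this
          linarith
        have hsq : w^2 ≤ (1/2 - u)^2 := by nlinarith
        have hge : (1:ℝ)/4 - m ≤ max (1/4 - m) 0 := le_max_left _ _
        rw [← hm]
        nlinarith [hwsq]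
    have hd0 : ∀ u ∈ Icc (1/Q) y₁, 0 ≤ dF Q u := by
      intro u hu
      have := hmono (left_mem_Icc.2 hy1Q) hu hu.1
      rw [dF_invQ hQ] at this
      exact this
    have hFmono : MonotoneOn (Ff Q) (Icc (1/Q) y₁) := by
      apply monoOn_of_derivpt Ff_cont.continuousOn (df := dF Q)
      · intro u hu
        have hu0 : 0 < u := lt_trans hQinv0 hu.1
        exact hasDerivAt_Ff hu0 (by linarith [hu.2, hy1half])
      · intro u hu
        exact hd0 u ⟨le_of_lt hu.1, le_of_lt hu.2⟩
    intro u hu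
    have := hFmono (left_mem_Icc.2 hy1Q) hu hu.1
    rw [Ff_invQ hQ] at this
    exact this
  have hP2 : ∀ u ∈ Icc y₂ (thQ Q), 0 ≤ Ff Q u := by
    have hmono : MonotoneOn (dF Q) (Icc y₂ (thQ Q)) := by
      apply monoOn_of_derivpt (df := fun u => 1/(u*(1-u))/Real.log Q - 2*Kc Q)
      · intro u hu
        have hu0 : 0 < u := by linarith [hu.1, hy2half]
        exact (hasDerivAt_dF hu0 (by linarith [hu.2, hT1])).continuousAt.continuousWithinAt
      · intro u hu
        have hu0 : 0 < u := by linarith [hu.1, hy2half]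
        exact hasDerivAt_dF hu0 (by linarith [hu.2, hT1])
      · intro u hu
        have hu0 : 0 < u := by linarith [hu.1, hy2half]
        have hu1 : u < 1 := by linarith [hu.2, hT1]
        apply ddF_nonneg hQ hu0 hu1
        have h12 : w ≤ u - 1/2 := by
          have := hu.1
          rw [hy2] at this
          linarith
        have hsq : w^2 ≤ (u - 1/2)^2 := by nlinarith
        have hge : (1:ℝ)/4 - m ≤ max (1/4 - m) 0 := le_max_left _ _
        rw [← hm]
        nlinarith [hwsq]
    have hd0 : ∀ u ∈ Icc y₂ (thQ Q), dF Q u ≤ 0 := by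
      intro u hu
      have := hmono hu (right_mem_Icc.2 hy2T) hu.2
      rw [dF_th hQ] at this
      exact this
    have hFanti : AntitoneOn (Ff Q) (Icc y₂ (thQ Q)) := by
      apply antiOn_of_derivpt Ff_cont.continuousOn (df := dF Q)
      · intro u hu
        have hu0 : 0 < u := by linarith [hu.1, hy2half]
        exact hasDerivAt_Ff hu0 (by linarith [hu.2, hT1])
      · intro u hu
        exact hd0 u ⟨le_of_lt hu.1, le_of_lt hu.2⟩
    intro u hu
    have := hFanti hu (right_mem_Icc.2 hy2T) hu.2
    rw [Ff_th hQ] at this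
    exact this
  have hP3 : ∀ u ∈ Icc y₁ y₂, 0 ≤ Ff Q u := by
    have hconc : ConcaveOn ℝ (Icc y₁ y₂) (Ff Q) := by
      apply concaveOn_of_derivpt Ff_cont.continuousOn (df := dF Q)
        (ddf := fun u => 1/(u*(1-u))/Real.log Q - 2*Kc Q)
      · intro u hu
        have hu0 : 0 < u := lt_trans hy10 hu.1
        have hu1 : u < 1 := lt_trans hu.2 hy21
        exact hasDerivAt_Ff hu0 hu1
      · intro u hu
        have hu0 : 0 < u := lt_trans hy10 hu.1
        have hu1 : u < 1 := lt_trans hu.2 hy21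
        exact hasDerivAt_dF hu0 hu1
      · intro u hu
        have hu0 : 0 < u := lt_trans hy10 hu.1
        have hu1 : u < 1 := lt_trans hu.2 hy21
        apply ddF_nonpos hQ hu0 hu1
        have hwpos : 0 < w := by
          have h1 := hu.1
          have h2 := hu.2
          rw [hy1] at h1
          rw [hy2] at h2
          linarith
        have hmaxeq : max (1/4 - m) 0 = 1/4 - m := by
          rcases max_cases (1/4 - m) 0 with ⟨he, _⟩ | ⟨he, _⟩
          · exact he
          · exfalso
            rw [he] at hwsq
            nlinarith
        have h1 := hu.1
        have h2 := hu.2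
        rw [hy1] at h1
        rw [hy2] at h2
        have hsq : (u - 1/2)^2 < w^2 := by nlinarith
        rw [hwsq, hmaxeq] at hsq
        rw [← hm]
        nlinarith
    exact nonneg_of_concaveOn hy12 hconc (hP1 y₁ ⟨hy1Q, le_refl _⟩) (hP2 y₂ ⟨le_refl _, hy2T⟩)
  intro u hu
  rcases le_or_gt u y₁ with h | h
  · exact hP1 u ⟨hu.1, h⟩
  · rcases le_or_gt y₂ u with h' | h'
    · exact hP2 u ⟨h', hu.2⟩
    · exact hP3 u ⟨le_of_lt h, le_of_lt h'⟩

end psiF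

section main
variable {q : ℕ}

lemma qEntropy_eq (hq3 : (3:ℝ) ≤ (q:ℝ)) {y : ℝ} (h0 : 0 ≤ y) (h1 : y < 1) :
    qEntropy q y = Hf (q:ℝ) y := by
  rcases eq_or_lt_of_le h0 with rfl | hy
  · simp [qEntropy, Hf]
  · have hq1 : ((q:ℝ)-1) ≠ 0 := by intro h; rw [sub_eq_zero] at h; linarith
    rw [qEntropy, Hf]
    simp only [Real.logb]
    rw [Real.log_div hq1 (ne_of_gt hy), one_div, Real.log_inv]
    ring

lemma alphaEP_eq (hq : 3 ≤ q) {x : ℝ} (hx : x ∈ Icc 0 (thQ (q:ℝ))) :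
    alphaEP q x = if x ≤ xsQ (q:ℝ) then Bf (q:ℝ) x else linf (q:ℝ) x := by
  have hq3 : (3:ℝ) ≤ (q:ℝ) := by exact_mod_cast hq
  rw [alphaEP, show (2*(q:ℝ)-3)/((q:ℝ)*((q:ℝ)-1)) = xsQ (q:ℝ) from rfl]
  by_cases h : x ≤ xsQ (q:ℝ)
  · rw [if_pos h, if_pos h]
    have heq : (1 - 1/(q:ℝ)) - Real.sqrt ((1 - 1/(q:ℝ))^2 - x*(1-1/(q:ℝ))) = yQ (q:ℝ) x := rfl
    rw [heq, qEntropy_eq hq3 (y_nonneg hq3 hx.1) (y_lt_one hq3), Bf]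
  · rw [if_neg h, if_neg h]
    rfl

lemma alphaE_eq (hq : 3 ≤ q) {x : ℝ} (hx : x ∈ Icc 0 (thQ (q:ℝ))) :
    alphaE q x = Bf (q:ℝ) x := by
  have hq3 : (3:ℝ) ≤ (q:ℝ) := by exact_mod_cast hq
  have hT := th_pos hq3
  have harg : (thQ (q:ℝ)) * (1 - Real.sqrt (1 - x/(thQ (q:ℝ)))) = yQ (q:ℝ) x := by
    have h1 : (thQ (q:ℝ))^2 * (1 - x/(thQ (q:ℝ))) = (thQ (q:ℝ))^2 - x * thQ (q:ℝ) := by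
      field_simp
    have h2 : Real.sqrt ((thQ (q:ℝ))^2 * (1 - x/thQ (q:ℝ)))
        = thQ (q:ℝ) * Real.sqrt (1 - x/thQ (q:ℝ)) := by
      rw [Real.sqrt_mul (sq_nonneg _), Real.sqrt_sq (le_of_lt hT)]
    rw [yQ, rQ, ← h1, h2]
    ring
  rw [alphaE]
  rw [show (1 - 1/(q:ℝ)) * (1 - Real.sqrt (1 - x/(1 - 1/(q:ℝ)))) = yQ (q:ℝ) x from harg]
  rw [qEntropy_eq hq3 (y_nonneg hq3 hx.1) (y_lt_one hq3), Bf]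

lemma Bf_cont (hq3 : (3:ℝ) ≤ (Q : ℝ)) : Continuous (Bf Q) := by
  have hy : Continuous (yQ Q) := continuous_const.sub (Real.continuous_sqrt.comp (by continuity))
  exact continuous_const.sub (Hf_cont.comp hy)

lemma linf_cont {Q : ℝ} : Continuous (linf Q) :=
  (continuous_const.sub continuous_id).mul continuous_const

lemma alphaEP_contOn (hq : 3 ≤ q) : ContinuousOn (alphaEP q) (Icc 0 (thQ (q:ℝ))) := by
  have hq3 : (3:ℝ) ≤ (q:ℝ) := by exact_mod_cast hq
  have hco : Continuous (fun x => if x ≤ xsQ (q:ℝ) then Bf (q:ℝ) x else linf (q:ℝ) x) := by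
    apply Continuous.if_le (Bf_cont hq3) linf_cont continuous_id continuous_const
    intro x hx
    rw [show x = xsQ (q:ℝ) from hx]
    exact B_eq_lin_xs hq3
  exact hco.continuousOn.congr (fun x hx => alphaEP_eq hq hx)

lemma alphaEP_hasDeriv (hq : 3 ≤ q) {x : ℝ} (hx : x ∈ Ioo 0 (thQ (q:ℝ))) :
    HasDerivAt (alphaEP q) (Dfun (q:ℝ) x) x := by
  have hq3 : (3:ℝ) ≤ (q:ℝ) := by exact_mod_cast hq
  rcases lt_trichotomy x (xsQ (q:ℝ)) with h | h | h
  · rw [Dfun, if_pos (le_of_lt h)]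
    apply (hasDerivAt_Bf hq3 hx.1 hx.2).congr_of_eventuallyEq
    filter_upwards [Ioo_mem_nhds hx.1 h] with z hz
    rw [alphaEP_eq hq ⟨le_of_lt hz.1, le_trans (le_of_lt hz.2) (le_of_lt (xs_lt_th hq3))⟩,
      if_pos (le_of_lt hz.2)]
  · subst h
    have hvalue : alphaEP q (xsQ (q:ℝ)) = Bf (q:ℝ) (xsQ (q:ℝ)) := by
      rw [alphaEP_eq hq ⟨le_of_lt (xs_pos hq3), le_of_lt (xs_lt_th hq3)⟩, if_pos (le_refl _)]
    have hleft : HasDerivWithinAt (alphaEP q) (-slp (q:ℝ)) (Iic (xsQ (q:ℝ))) (xsQ (q:ℝ)) := by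
      have hB := hasDerivAt_Bf hq3 (xs_pos hq3) (xs_lt_th hq3)
      rw [DL_xs hq3] at hB
      apply HasDerivWithinAt.congr_of_eventuallyEq hB.hasDerivWithinAt ?_ hvalue
      filter_upwards [inter_mem (mem_nhdsWithin_of_mem_nhds (Ioi_mem_nhds (xs_pos hq3)))
        self_mem_nhdsWithin] with z hz
      have hz2 : z ≤ xsQ (q:ℝ) := hz.2
      rw [alphaEP_eq hq ⟨le_of_lt hz.1, le_trans hz2 (le_of_lt (xs_lt_th hq3))⟩, if_pos hz2]
    have hright : HasDerivWithinAt (alphaEP q) (-slp (q:ℝ)) (Ici (xsQ (q:ℝ))) (xsQ (q:ℝ)) := by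
      apply HasDerivWithinAt.congr hasDerivAt_linf.hasDerivWithinAt ?_
        (by rw [hvalue]; exact B_eq_lin_xs hq3)
      intro z hz
      rcases eq_or_lt_of_le (Set.mem_Ici.mp hz) with rfl | hlt
      · rw [hvalue]
        exact B_eq_lin_xs hq3
      · rw [alphaEP, show (2*(q:ℝ)-3)/((q:ℝ)*((q:ℝ)-1)) = xsQ (q:ℝ) from rfl, if_neg (not_le.2 hlt)]
        rfl
    have hu := hleft.union hright
    rw [Iic_union_Ici, hasDerivWithinAt_univ] at hu
    rw [Dfun, if_pos (le_refl _), DL_xs hq3]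
    exact hu
  · rw [Dfun, if_neg (not_le.2 h)]
    apply hasDerivAt_linf.congr_of_eventuallyEq
    filter_upwards [Ioi_mem_nhds h] with z hz
    rw [alphaEP, show (2*(q:ℝ)-3)/((q:ℝ)*((q:ℝ)-1)) = xsQ (q:ℝ) from rfl, if_neg (not_le.2 hz)]
    rfl

lemma DL_contAt {Q x : ℝ} (hQ3 : 3 ≤ Q) (hx0 : 0 < x) (hx1 : x < thQ Q) :
    ContinuousAt (DL Q) x := by
  have hy0 := y_pos hQ3 hx0
  have hy1 : yQ Q x < 1 := y_lt_one hQ3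
  have hr0 := r_pos hQ3 hx1
  have hyc : Continuous (yQ Q) := continuous_const.sub (Real.continuous_sqrt.comp (by continuity))
  have hrc : Continuous (rQ Q) := Real.continuous_sqrt.comp (by continuity)
  have hl1 : ContinuousAt (fun x => Real.log (yQ Q x)) x :=
    (Real.continuousAt_log (ne_of_gt hy0)).comp hyc.continuousAt
  have hl2 : ContinuousAt (fun x => Real.log (1 - yQ Q x)) x :=
    (Real.continuousAt_log (by intro hc; rw [sub_eq_zero] at hc; linarith)).comp
      (continuous_const.sub hyc).continuousAt
  show ContinuousAt (fun x => -(thQ Q/(2 * rQ Q x)) *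
    ((Real.log (Q-1) - Real.log (yQ Q x) + Real.log (1 - yQ Q x))/Real.log Q)) x
  apply ContinuousAt.mul
  · apply ContinuousAt.neg
    exact ContinuousAt.div continuousAt_const (continuous_const.mul hrc).continuousAt
      (by positivity)
  · exact ((continuousAt_const.sub hl1).add hl2).div_const _

lemma Dfun_contOn {Q : ℝ} (hQ3 : 3 ≤ Q) : ContinuousOn (Dfun Q) (Ioo 0 (thQ Q)) := by
  intro x hx
  rcases lt_trichotomy x (xsQ Q) with h | h | h
  · apply ContinuousAt.continuousWithinAt
    apply (DL_contAt hQ3 hx.1 hx.2).congr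
    filter_upwards [Iio_mem_nhds h] with z hz
    rw [Dfun, if_pos (le_of_lt hz)]
  · subst h
    apply ContinuousAt.continuousWithinAt
    have hleft : ContinuousWithinAt (Dfun Q) (Iic (xsQ Q)) (xsQ Q) := by
      apply ContinuousWithinAt.congr (DL_contAt hQ3 hx.1 hx.2).continuousWithinAt
      · intro z hz
        rw [Dfun, if_pos (show z ≤ xsQ Q from hz)]
      · rw [Dfun, if_pos (le_refl _)]
    have hright : ContinuousWithinAt (Dfun Q) (Ici (xsQ Q)) (xsQ Q) := by
      apply ContinuousWithinAt.congr (continuousWithinAt_const (b := -slp Q))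
      · intro z hz
        rcases eq_or_lt_of_le (Set.mem_Ici.mp hz) with rfl | hlt
        · rw [Dfun, if_pos (le_refl _), DL_xs hQ3]
        · rw [Dfun, if_neg (not_le.2 hlt)]
      · rw [Dfun, if_pos (le_refl _), DL_xs hQ3]
    have hu := hleft.union hright
    rwa [Iic_union_Ici, continuousWithinAt_univ] at hu
  · apply ContinuousAt.continuousWithinAt
    apply continuousAt_const.congr
    filter_upwards [Ioi_mem_nhds h] with z hz
    rw [Dfun, if_neg (not_le.2 hz)]

lemma part1 (hq : 3 ≤ q) : ConvexOn ℝ (Icc (0:ℝ) (thQ (q:ℝ))) (alphaEP q) := by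
  have hq3 : (3:ℝ) ≤ (q:ℝ) := by exact_mod_cast hq
  apply MonotoneOn.convexOn_of_deriv (convex_Icc _ _) (alphaEP_contOn hq)
  · rw [interior_Icc]
    exact fun x hx => (alphaEP_hasDeriv hq hx).differentiableAt.differentiableWithinAt
  · rw [interior_Icc]
    intro a ha b hb hab
    rw [(alphaEP_hasDeriv hq ha).deriv, (alphaEP_hasDeriv hq hb).deriv]
    exact Dfun_mono hq3 ha hb hab

lemma part2 (hq : 3 ≤ q) : ContDiffOn ℝ 1 (alphaEP q) (Ioo (0:ℝ) (thQ (q:ℝ))) := by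
  have hq3 : (3:ℝ) ≤ (q:ℝ) := by exact_mod_cast hq
  have hgoal : (1 : WithTop ℕ∞) = 0 + 1 := by norm_num
  rw [hgoal, contDiffOn_succ_iff_deriv_of_isOpen isOpen_Ioo]
  refine ⟨fun x hx => (alphaEP_hasDeriv hq hx).differentiableAt.differentiableWithinAt, ?_, ?_⟩
  · intro h
    exact absurd h (by simp)
  · rw [contDiffOn_zero]
    exact (Dfun_contOn hq3).congr (fun x hx => (alphaEP_hasDeriv hq hx).deriv)

lemma part3 (hq : 3 ≤ q) : ∀ x ∈ Icc (0:ℝ) (thQ (q:ℝ)), alphaEP q x ≤ alphaE q x := by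
  intro x hx
  have hq3 : (3:ℝ) ≤ (q:ℝ) := by exact_mod_cast hq
  rw [alphaEP_eq hq hx, alphaE_eq hq hx]
  by_cases h : x ≤ xsQ (q:ℝ)
  · rw [if_pos h]
  · rw [if_neg h]
    push_neg at h
    have hy1 : 1/(q:ℝ) ≤ yQ (q:ℝ) x := invQ_le_y hq3 (le_of_lt h)
    have hF := F_nonneg hq3 (yQ (q:ℝ) x) ⟨hy1, y_le_th hq3⟩
    have hsq : (thQ (q:ℝ) - yQ (q:ℝ) x)^2 = (thQ (q:ℝ))^2 - x * thQ (q:ℝ) := by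
      rw [← r_eq hq3]
      exact r_sq hq3 hx.2
    have hT := th_pos hq3
    have hslp : slp (q:ℝ) = Kc (q:ℝ) * thQ (q:ℝ) := by
      apply mul_right_cancel₀ (ne_of_gt hT)
      rw [slp_th hq3]
      ring
    have heq : Bf (q:ℝ) x - linf (q:ℝ) x = Ff (q:ℝ) (yQ (q:ℝ) x) := by
      rw [Bf, linf, Ff, hslp]
      linear_combination (Kc (q:ℝ)) * hsq
    linarith [hF, heq]

lemma part4 (hq : 3 ≤ q) :
    ∀ x ∈ Icc (0:ℝ) (thQ (q:ℝ)), alphaEP q x ≤ 1 - x/(thQ (q:ℝ)) := by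
  intro x hx
  have hq3 : (3:ℝ) ≤ (q:ℝ) := by exact_mod_cast hq
  have hT := th_pos hq3
  have hL := logQ_pos hq3
  have hA := logQ1_pos hq3
  obtain ⟨hn1, hn2, hn3, hn4⟩ := nonzeros hq3
  rw [alphaEP_eq hq hx]
  by_cases h : x ≤ xsQ (q:ℝ)
  · rw [if_pos h]
    have hy0 := y_nonneg hq3 hx.1
    have hyq := y_le_invQ hq3 h
    have hpsi := psi_nonneg hq3 (yQ (q:ℝ) x) ⟨hy0, hyq⟩
    have hsq : (thQ (q:ℝ) - yQ (q:ℝ) x)^2 = (thQ (q:ℝ))^2 - x * thQ (q:ℝ) := by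
      rw [← r_eq hq3]
      exact r_sq hq3 hx.2
    have hxeq : x/thQ (q:ℝ)
        = (2*thQ (q:ℝ)*(yQ (q:ℝ) x) - (yQ (q:ℝ) x)^2)/(thQ (q:ℝ))^2 := by
      rw [div_eq_div_iff (ne_of_gt hT) (by positivity)]
      linear_combination (thQ (q:ℝ)) * hsq
    rw [Bf, hxeq]
    simp only [psif] at hpsi
    linarith
  · rw [if_neg h]
    have hxth : x ≤ thQ (q:ℝ) := hx.2
    have h1x : 1 - x/thQ (q:ℝ) = (thQ (q:ℝ) - x)*(1/thQ (q:ℝ)) := by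
      field_simp
    have heq2 : slp (q:ℝ) * thQ (q:ℝ)
        = ((q:ℝ)-1)^2*Real.log ((q:ℝ)-1)/(((q:ℝ)-2)*((q:ℝ)*Real.log (q:ℝ))) := by
      rw [slp, th_eq hq3, Hlq hq3]
      field_simp
    have hslpth : slp (q:ℝ) * thQ (q:ℝ) ≤ 1 := by
      rw [heq2, div_le_one (mul_pos (by linarith : (0:ℝ) < (q:ℝ)-2)
        (mul_pos (by linarith : (0:ℝ) < (q:ℝ)) hL))]
      nlinarith [L2 hq3]
    rw [linf, h1x]
    apply mul_le_mul_of_nonneg_left _ (by linarith)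
    rw [le_div_iff₀ hT]
    exact hslpth

end main
end EPaux

theorem stmt3 (q : ℕ) (hq : 3 ≤ q) :
    ConvexOn ℝ (Set.Icc (0 : ℝ) (1 - 1 / (q : ℝ))) (alphaEP q) ∧
    ContDiffOn ℝ 1 (alphaEP q) (Set.Ioo (0 : ℝ) (1 - 1 / (q : ℝ))) ∧
    (∀ x ∈ Set.Icc (0 : ℝ) (1 - 1 / (q : ℝ)), alphaEP q x ≤ alphaE q x) ∧
    (∀ x ∈ Set.Icc (0 : ℝ) (1 - 1 / (q : ℝ)),
      alphaEP q x ≤ 1 - x / (1 - 1 / (q : ℝ))) := by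
  exact ⟨EPaux.part1 hq, EPaux.part2 hq, EPaux.part3 hq, EPaux.part4 hq⟩
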